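/- Head spine absorbs call-by-name: for all terms M and N, he(M) = N if and only if there exists a term P with bn(M) = P and he(P) = N; i.e., as big-step relations, he ∘ bn = he. -/

import Mathlib

/-- Pure λ-calculus terms (de Bruijn representation). -/
inductive Tm : Type
  | var : Nat → Tm
  | lam : Tm → Tm
  | app : Tm → Tm → Tm
deriving DecidableEq

/-- Shift the free variables (those ≥ `c`) of a term up by one. -/
def lift (c : Nat) : Tm → Tm
  | .var n => if n < c then .var n else .var (n + 1)
  | .lam b => .lam (lift (c + 1) b)
  | .app m n => .app (lift c m) (lift c n)

/-- Capture-avoiding substitution `[N/k]B` (de Bruijn). -/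
def subst (N : Tm) (k : Nat) : Tm → Tm
  | .var n => if n < k then .var n else if n = k then N else .var (n - 1)
  | .lam b => .lam (subst (lift 0 N) (k + 1) b)
  | .app m n => .app (subst N k m) (subst N k n)
/-- Composition of big-step relations: `(Comp s2 s1) M N` iff
    there is `P` with `s1 M P` and `s2 P N`. -/
def Comp (s2 s1 : Tm → Tm → Prop) : Tm → Tm → Prop :=
  fun M N => ∃ P, s1 M P ∧ s2 P N

/-- The term `Ω = (λx.x x)(λx.x x)`. -/
def Omega : Tm :=
  .app (.lam (.app (.var 0) (.var 0))) (.lam (.app (.var 0) (.var 0)))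
/-- Call-by-name big-step relation. -/
inductive Bn : Tm → Tm → Prop
  | var : ∀ n, Bn (.var n) (.var n)
  | lam : ∀ B, Bn (.lam B) (.lam B)
  | beta : ∀ M N B B', Bn M (.lam B) → Bn (subst N 0 B) B' → Bn (.app M N) B'
  | neu : ∀ M N M', Bn M M' → (∀ B, M' ≠ .lam B) → Bn (.app M N) (.app M' N)
/-- Head spine big-step relation. -/
inductive He : Tm → Tm → Prop
  | var : ∀ n, He (.var n) (.var n)
  | lam : ∀ B B', He B B' → He (.lam B) (.lam B')
  | beta : ∀ M N B B', He M (.lam B) → He (subst N 0 B) B' → He (.app M N) B'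
  | neu : ∀ M N M', He M M' → (∀ B, M' ≠ .lam B) → He (.app M N) (.app M' N)

set_option linter.unreachableTactic false
set_option linter.unnecessarySeqFocus false
set_option linter.unusedTactic false

theorem lift_lift (t : Tm) : ∀ c c', c ≤ c' → lift c (lift c' t) = lift (c' + 1) (lift c t) := by
  induction t with
  | var n =>
    intro c c' h
    simp only [lift]
    split_ifs <;> simp_all [lift] <;> (try split_ifs) <;> first | rfl | omega | (congr 1; omega)
  | lam b ih =>
    intro c c' h
    simp only [lift, ih (c+1) (c'+1) (by omega)]
  | app m n ihm ihn =>
    intro c c' h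
    simp only [lift, ihm c c' h, ihn c c' h]

theorem subst_lift (M : Tm) : ∀ (k : Nat) (N : Tm), subst N k (lift k M) = M := by
  induction M with
  | var n =>
    intro k N
    simp only [lift, subst]
    split_ifs <;> simp_all [subst] <;> (try split_ifs) <;> first | rfl | omega | (congr 1; omega)
  | lam b ih =>
    intro k N
    simp only [lift, subst, ih]
  | app m n ihm ihn =>
    intro k N
    simp only [lift, subst, ihm, ihn]

theorem lift_subst (M : Tm) : ∀ (c k : Nat) (N : Tm), c ≤ k →
    lift c (subst N k M) = subst (lift c N) (k + 1) (lift c M) := by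
  induction M with
  | var n =>
    intro c k N h
    simp only [lift, subst]
    split_ifs <;> simp_all [lift, subst] <;> (try split_ifs) <;> first | rfl | omega | (congr 1; omega)
  | lam b ih =>
    intro c k N h
    simp only [lift, subst, ih (c+1) (k+1) _ (by omega), lift_lift N 0 c (by omega)]
  | app m n ihm ihn =>
    intro c k N h
    simp only [lift, subst, ihm c k N h, ihn c k N h]

theorem subst_subst (B : Tm) : ∀ (i k : Nat) (N M : Tm),
    subst N (i + k) (subst M i B) =
      subst (subst N (i + k) M) i (subst (lift i N) (i + k + 1) B) := by
  induction B with
  | var n =>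
    intro i k N M
    simp only [subst]
    split_ifs <;> simp_all [subst] <;> (try split_ifs) <;>
      first | rfl | omega | (congr 1; omega) | (exact (subst_lift N i _).symm)
  | lam b ih =>
    intro i k N M
    simp only [subst]
    rw [show i + k + 1 = (i+1) + k from by omega, ih (i+1) k (lift 0 N) (lift 0 M)]
    rw [lift_subst M 0 (i+k) N (by omega), lift_lift N 0 i (by omega)]
    simp only [show (i+1) + k = i + k + 1 from by omega, show i+k+1+1 = i+k+2 from by omega]
  | app m n ihm ihn =>
    intro i k N M
    simp only [subst, ihm, ihn]

theorem subst_subst0 (B : Tm) (k : Nat) (N M : Tm) :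
    subst N k (subst M 0 B) = subst (subst N k M) 0 (subst (lift 0 N) (k + 1) B) := by
  have := subst_subst B 0 k N M
  simpa using this

/-- Neutral terms: a variable applied to arguments. -/
inductive Neu : Tm → Prop
  | var (n) : Neu (.var n)
  | app {m} (n) : Neu m → Neu (.app m n)

/-- Head normal forms. -/
inductive Hnf : Tm → Prop
  | ne {m} : Neu m → Hnf m
  | lam {b} : Hnf b → Hnf (.lam b)

/-- Small-step (deterministic) head reduction. -/
inductive Hstep : Tm → Tm → Prop
  | beta (b n) : Hstep (.app (.lam b) n) (subst n 0 b)
  | lam {b b'} : Hstep b b' → Hstep (.lam b) (.lam b')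
  | app {m m'} (n) : (∀ b, m ≠ .lam b) → Hstep m m' → Hstep (.app m n) (.app m' n)

/-- Weak head reduction. -/
inductive Wstep : Tm → Tm → Prop
  | beta (b n) : Wstep (.app (.lam b) n) (subst n 0 b)
  | app {m m'} (n) : Wstep m m' → Wstep (.app m n) (.app m' n)

/-- `n`-fold head reduction. -/
inductive StepN : Nat → Tm → Tm → Prop
  | refl (a) : StepN 0 a a
  | head {a b c n} : Hstep a b → StepN n b c → StepN (n+1) a c

theorem Neu.no_lam {m} (h : Neu m) : ∀ b, m ≠ .lam b := by
  cases h <;> intro b <;> simp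

theorem hnf_no_step : ∀ {m m'}, Hnf m → ¬ Hstep m m' := by
  intro m m' h
  induction h generalizing m' with
  | ne hne =>
    induction hne generalizing m' with
    | var n => intro h; cases h
    | app n hm ih =>
      intro h
      cases h with
      | beta b n => exact hm.no_lam _ rfl
      | app n hl hs => exact ih hs
  | lam hb ih => intro h; cases h with | lam hs => exact ih hs

theorem hnf_of_no_step : ∀ {m}, (∀ c, ¬ Hstep m c) → Hnf m := by
  intro m
  induction m with
  | var n => intro _; exact Hnf.ne (Neu.var n)
  | lam b ih =>
    intro h
    exact Hnf.lam (ih fun c hc => h (.lam c) (Hstep.lam hc))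
  | app m n ihm ihn =>
    intro h
    have hml : ∀ b, m ≠ Tm.lam b := by
      intro b hb; subst hb; exact h _ (Hstep.beta b n)
    have hm : Hnf m := ihm fun c hc => h _ (Hstep.app n hml hc)
    cases hm with
    | ne hne => exact Hnf.ne (Neu.app n hne)
    | lam _ => exact absurd rfl (hml _)

theorem hstep_det : ∀ {a b c}, Hstep a b → Hstep a c → b = c := by
  intro a b c h
  induction h generalizing c with
  | beta b n =>
    intro h2
    cases h2 with
    | beta => rfl
    | app n hl _ => exact absurd rfl (hl _)
  | lam hs ih =>
    intro h2
    cases h2 with | lam hs2 => rw [ih hs2]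
  | app n hl hs ih =>
    intro h2
    cases h2 with
    | beta => exact absurd rfl (hl _)
    | app _ _ hs2 => rw [ih hs2]

theorem Wstep.not_lam {m m'} (h : Wstep m m') : ∀ b, m ≠ .lam b := by
  cases h <;> simp

theorem Wstep.hstep {m m'} (h : Wstep m m') : Hstep m m' := by
  induction h with
  | beta b n => exact Hstep.beta b n
  | app n hw ih => exact Hstep.app n hw.not_lam ih

theorem hstep_wstep : ∀ {m m'}, (∀ b, m ≠ .lam b) → Hstep m m' → Wstep m m' := by
  intro m m' hl h
  induction h with
  | beta b n => exact Wstep.beta b n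
  | lam _ => exact absurd rfl (hl _)
  | app n hl' hs ih => exact Wstep.app n (ih hl')

theorem Hstep.shape {m m'} (h : Hstep m m') : (∃ b, m = .lam b) ∨ (∃ p q, m = .app p q) := by
  cases h with
  | beta b n => exact Or.inr ⟨_, _, rfl⟩
  | lam _ => exact Or.inl ⟨_, rfl⟩
  | app n _ _ => exact Or.inr ⟨_, _, rfl⟩

theorem hstep_subst : ∀ {b b'}, Hstep b b' → ∀ (n : Tm) (k : Nat),
    Hstep (subst n k b) (subst n k b') := by
  intro b b' h
  induction h with
  | beta b m =>
    intro n k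
    rw [subst_subst0]
    exact Hstep.beta _ _
  | lam hs ih =>
    intro n k
    exact Hstep.lam (ih _ _)
  | app m hl hs ih =>
    intro n k
    rcases hs.shape with ⟨b, rfl⟩ | ⟨p, q, rfl⟩
    · exact absurd rfl (hl _)
    · exact Hstep.app _ (by simp [subst]) (ih _ _)

theorem StepN.trans : ∀ {i j a b c}, StepN i a b → StepN j b c → StepN (i + j) a c := by
  intro i j a b c h
  induction h with
  | refl a => intro h2; simpa using h2
  | @head _ _ _ n hs _ ih =>
    intro h2
    have := StepN.head hs (ih h2)
    rwa [show n + j + 1 = n + 1 + j from by omega] at this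

theorem StepN.lam_cong : ∀ {i b b'}, StepN i b b' → StepN i (.lam b) (.lam b') := by
  intro i b b' h
  induction h with
  | refl => exact StepN.refl _
  | head hs _ ih => exact StepN.head (Hstep.lam hs) ih

theorem StepN.lam_inv : ∀ {i b c}, StepN i (.lam b) c → ∃ b', c = .lam b' ∧ StepN i b b' := by
  intro i b c h
  generalize hb : Tm.lam b = lb at h
  induction h generalizing b with
  | refl a => exact ⟨b, hb.symm, StepN.refl b⟩
  | head hs _ ih =>
    subst hb
    cases hs with
    | lam hs' =>
      obtain ⟨b', rfl, hsteps⟩ := ih rfl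
      exact ⟨b', rfl, StepN.head hs' hsteps⟩

theorem StepN.subst_cong : ∀ {i b b'} (n : Tm) (k : Nat),
    StepN i b b' → StepN i (subst n k b) (subst n k b') := by
  intro i b b' n k h
  induction h with
  | refl => exact StepN.refl _
  | head hs _ ih => exact StepN.head (hstep_subst hs n k) ih

/-- determinism-based prefix lemma -/
theorem stepn_prefix : ∀ {j a b}, StepN j a b → ∀ {k n}, StepN k a n → Hnf n →
    j ≤ k ∧ StepN (k - j) b n := by
  intro j a b h
  induction h with
  | refl => intro k n h2 _; exact ⟨Nat.zero_le _, by simpa using h2⟩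
  | @head _ _ _ n' hs hrest ih =>
    intro k n h2 hn
    cases h2 with
    | refl => exact absurd hs (hnf_no_step hn)
    | @head _ _ _ k' hs2 hrest2 =>
      rw [← hstep_det hs hs2] at hrest2
      obtain ⟨hle, hsteps⟩ := ih hrest2 hn
      refine ⟨by omega, ?_⟩
      rwa [show k' + 1 - (n' + 1) = k' - n' from by omega]

/-- extraction: if `subst n 0 b` head-normalizes, then `b` does too (in fewer steps),
    and the remainders line up. -/
theorem extract : ∀ j : Nat, ∀ {b N} (n : Tm), StepN j (subst n 0 b) N → Hnf N →
    ∃ i b', i ≤ j ∧ StepN i b b' ∧ Hnf b' ∧ StepN (j - i) (subst n 0 b') N := by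
  intro j
  induction j using Nat.strong_induction_on with
  | _ j ih =>
    intro b N n hsteps hN
    by_cases hb : ∃ b2, Hstep b b2
    · obtain ⟨b2, hb2⟩ := hb
      have hsub : Hstep (subst n 0 b) (subst n 0 b2) := hstep_subst hb2 n 0
      cases hsteps with
      | refl => exact absurd hsub (hnf_no_step hN)
      | @head _ c _ j' hs hrest =>
        rw [hstep_det hs hsub] at hrest
        obtain ⟨i', b', hle, hbsteps, hb', hrem⟩ := ih j' (by omega) n hrest hN
        refine ⟨i' + 1, b', by omega, StepN.head hb2 hbsteps, hb', ?_⟩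
        rwa [show j' + 1 - (i' + 1) = j' - i' from by omega]
    · push_neg at hb
      exact ⟨0, b, Nat.zero_le _, StepN.refl b, hnf_of_no_step hb, by simpa using hsteps⟩

theorem app_decomp : ∀ k : Nat, ∀ {m0 n1 N}, StepN k (.app m0 n1) N → Hnf N →
    (∃ r B j, r + 1 + j = k ∧ StepN r m0 (.lam B) ∧ StepN j (subst n1 0 B) N) ∨
    (∃ m', N = .app m' n1 ∧ StepN k m0 m' ∧ Neu m') := by
  intro k
  induction k with
  | zero =>
    intro m0 n1 N h hN
    cases h
    cases hN with
    | ne hne =>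
      cases hne with
      | app n hm => exact Or.inr ⟨m0, rfl, StepN.refl m0, hm⟩
  | succ k ihk =>
    intro m0 n1 N h hN
    cases h with
    | head hs hrest =>
      cases hs with
      | beta b n => exact Or.inl ⟨0, b, k, by omega, StepN.refl _, hrest⟩
      | app n hl hs' =>
        rcases ihk hrest hN with ⟨r, B, j, hk, h1, h2⟩ | ⟨m', rfl, h1, h2⟩
        · exact Or.inl ⟨r + 1, B, j, by omega, StepN.head hs' h1, h2⟩
        · exact Or.inr ⟨m', rfl, StepN.head hs' h1, h2⟩

theorem he_of_neu : ∀ {m}, Neu m → He m m := by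
  intro m h
  induction h with
  | var n => exact He.var n
  | app n hm ih => exact He.neu _ _ _ ih hm.no_lam

theorem he_of_stepn : ∀ (k : Nat) (M N : Tm), StepN k M N → Hnf N → He M N := by
  intro k
  induction k using Nat.strong_induction_on with
  | _ k ihk =>
    intro M
    induction M with
    | var n =>
      intro N h hN
      cases h with
      | refl => exact He.var n
      | head hs _ => cases hs
    | lam b ihb =>
      intro N h hN
      obtain ⟨b', rfl, hsteps⟩ := StepN.lam_inv h
      cases hN with
      | ne hne => cases hne
      | lam hb' => exact He.lam _ _ (ihb b' hsteps hb')
    | app m0 n1 ihm ihn =>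
      intro N h hN
      rcases app_decomp k h hN with ⟨r, B, j, hk, h1, h2⟩ | ⟨m', rfl, h1, h2⟩
      · -- beta path
        obtain ⟨i, B', hle, hBsteps, hB', hrem⟩ := extract j n1 h2 hN
        have hmsteps : StepN (r + i) m0 (.lam B') :=
          StepN.trans h1 (StepN.lam_cong hBsteps)
        have hm : He m0 (.lam B') := ihk (r + i) (by omega) m0 _ hmsteps (Hnf.lam hB')
        have hsub : He (subst n1 0 B') N := ihk (j - i) (by omega) _ _ hrem hN
        exact He.beta _ _ _ _ hm hsub
      · -- neutral path
        have hm : He m0 m' := ihm m' h1 (Hnf.ne h2)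
        exact He.neu _ _ _ hm h2.no_lam

theorem he_hnf : ∀ {M N}, He M N → Hnf N := by
  intro M N h
  induction h with
  | var n => exact Hnf.ne (Neu.var n)
  | lam B B' _ ih => exact Hnf.lam ih
  | beta M N B B' _ _ _ ih2 => exact ih2
  | neu M N M' _ hl ih1 =>
    cases ih1 with
    | ne hne => exact Hnf.ne (Neu.app _ hne)
    | lam _ => exact absurd rfl (hl _)

theorem stepn_app_cong : ∀ {k m m'}, StepN k m m' → (∀ b, m' ≠ .lam b) →
    ∀ n, StepN k (.app m n) (.app m' n) := by
  intro k m m' h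
  induction h with
  | refl => intro _ _; exact StepN.refl _
  | @head a b c i hs hrest ih =>
    intro hl n
    have hal : ∀ b', a ≠ Tm.lam b' := by
      intro b' hb; subst hb
      cases hs with
      | lam hs' =>
        obtain ⟨b'', rfl, _⟩ := StepN.lam_inv hrest
        exact hl _ rfl
    exact StepN.head (Hstep.app n hal hs) (ih hl n)

/-- if `m` head-reduces to `lam B`, then `app m n` head-reduces to `subst n 0 B`. -/
theorem stepn_to_beta : ∀ (r : Nat) {m B}, StepN r m (.lam B) →
    ∀ n, ∃ s, StepN s (.app m n) (subst n 0 B) := by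
  intro r
  induction r using Nat.strong_induction_on with
  | _ r ihr =>
    intro m B h n
    cases h with
    | refl => exact ⟨1, StepN.head (Hstep.beta B n) (StepN.refl _)⟩
    | @head _ c _ r' hs hrest =>
      by_cases hm : ∃ b0, m = Tm.lam b0
      · obtain ⟨b0, rfl⟩ := hm
        cases hs with
        | lam hs' =>
          obtain ⟨B'', hB, hb1⟩ := StepN.lam_inv hrest
          have hBB : B = B'' := by injection hB
          subst hBB
          have h1 : StepN (r' + 1) b0 B := StepN.head hs' hb1
          have h2 : StepN (r' + 1) (subst n 0 b0) (subst n 0 B) := StepN.subst_cong n 0 h1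
          exact ⟨(r' + 1) + 1, StepN.head (Hstep.beta b0 n) h2⟩
      · push_neg at hm
        obtain ⟨s, hsrest⟩ := ihr r' (by omega) hrest n
        exact ⟨s + 1, by
          have := StepN.head (Hstep.app n hm hs) hsrest
          rwa [show s + 1 = s + 1 from rfl]⟩

theorem he_stepn : ∀ {M N}, He M N → ∃ k, StepN k M N := by
  intro M N h
  induction h with
  | var n => exact ⟨0, StepN.refl _⟩
  | lam B B' _ ih =>
    obtain ⟨k, hk⟩ := ih
    exact ⟨k, StepN.lam_cong hk⟩
  | beta M N B B' _ _ ih1 ih2 =>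
    obtain ⟨r, hr⟩ := ih1
    obtain ⟨j, hj⟩ := ih2
    obtain ⟨s, hs⟩ := stepn_to_beta r hr N
    exact ⟨s + j, StepN.trans hs hj⟩
  | neu M N M' hm hl ih =>
    obtain ⟨k, hk⟩ := ih
    exact ⟨k, stepn_app_cong hk hl N⟩

theorem bn_of_neu : ∀ {m}, Neu m → Bn m m := by
  intro m h
  induction h with
  | var n => exact Bn.var n
  | app n hm ih => exact Bn.neu _ _ _ ih hm.no_lam

theorem bn_of_hnf : ∀ {m}, Hnf m → Bn m m := by
  intro m h
  cases h with
  | ne hne => exact bn_of_neu hne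
  | lam _ => exact Bn.lam _

/-- weak-head expansion of `Bn`. -/
theorem bn_expand : ∀ {m c}, Wstep m c → ∀ {v}, Bn c v → Bn m v := by
  intro m c h
  induction h with
  | beta b n =>
    intro v hv
    exact Bn.beta _ _ _ _ (Bn.lam b) hv
  | app n hw ih =>
    intro v hv
    cases hv with
    | beta _ _ B _ hq hs => exact Bn.beta _ _ _ _ (ih hq) hs
    | neu _ _ q'' hq hl => exact Bn.neu _ _ _ (ih hq) hl

/-- forward factorization: a head normalization factors through `Bn`. -/
theorem factor : ∀ (k : Nat) {M N}, StepN k M N → Hnf N → ∃ P, Bn M P ∧ He P N := by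
  intro k
  induction k with
  | zero =>
    intro M N h hN
    cases h
    exact ⟨M, bn_of_hnf hN, he_of_stepn 0 M M (StepN.refl M) hN⟩
  | succ k ihk =>
    intro M N h hN
    match M with
    | .var n => cases h with | head hs _ => cases hs
    | .lam b => exact ⟨.lam b, Bn.lam b, he_of_stepn (k+1) _ _ h hN⟩
    | .app m0 n1 =>
      cases h with
      | head hs hrest =>
        have hw : Wstep (.app m0 n1) _ := hstep_wstep (by simp) hs
        obtain ⟨P, hbn, hhe⟩ := ihk hrest hN
        exact ⟨P, bn_expand hw hbn, hhe⟩

theorem wsteps_app_cong {m m'} (n : Tm) (h : Relation.ReflTransGen Wstep m m') :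
    Relation.ReflTransGen Wstep (.app m n) (.app m' n) :=
  Relation.ReflTransGen.lift (fun x => Tm.app x n) (fun _ _ hs => Wstep.app n hs) m m' h

theorem bn_wsteps : ∀ {M P}, Bn M P → Relation.ReflTransGen Wstep M P := by
  intro M P h
  induction h with
  | var n => exact Relation.ReflTransGen.refl
  | lam B => exact Relation.ReflTransGen.refl
  | beta M N B B' _ _ ih1 ih2 =>
    exact ((wsteps_app_cong N ih1).tail (Wstep.beta B N)).trans ih2
  | neu M N M' _ _ ih => exact wsteps_app_cong N ih

theorem stepn_of_wsteps : ∀ {M P}, Relation.ReflTransGen Wstep M P → ∃ k, StepN k M P := by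
  intro M P h
  induction h with
  | refl => exact ⟨0, StepN.refl _⟩
  | tail _ hstep ih =>
    obtain ⟨k, hk⟩ := ih
    exact ⟨k + 1, StepN.trans hk (StepN.head hstep.hstep (StepN.refl _))⟩

/-- Head spine absorbs call-by-name: `he(M) = N` iff there is `P` with
    `bn(M) = P` and `he(P) = N`; i.e. `he ∘ bn = he`. -/
theorem he_absorbs_bn :
    (∀ M N : Tm, He M N ↔ ∃ P : Tm, Bn M P ∧ He P N) ∧
    Comp He Bn = He := by
  have main : ∀ M N : Tm, He M N ↔ ∃ P : Tm, Bn M P ∧ He P N := by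
    intro M N
    constructor
    · intro h
      obtain ⟨k, hk⟩ := he_stepn h
      exact factor k hk (he_hnf h)
    · rintro ⟨P, hbn, hhe⟩
      obtain ⟨a, ha⟩ := stepn_of_wsteps (bn_wsteps hbn)
      obtain ⟨b, hb⟩ := he_stepn hhe
      exact he_of_stepn (a + b) M N (StepN.trans ha hb) (he_hnf hhe)
  refine ⟨main, ?_⟩
  funext M N
  exact propext ((main M N).symm)
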